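/- For fixed integers q ≥ 2 and R ≥ 1, liminf_{n→∞} K_D^q(n,R) · n^R (q−1)^R / (R! · q^n) ≥ 1; that is, every R-deletion-covering code of length n has at least (R! q^n / (n^R (q−1)^R)) · (1 − o(1)) codewords as n → ∞. -/

import Mathlib

/-- `KD q n R` is the minimum cardinality of an `R`-deletion-covering code of
length-`n` words over the alphabet `Fin q`. -/
noncomputable def KD (q n R : ℕ) : ℕ :=
  sInf {k : ℕ | ∃ C : Finset (List (Fin q)),
    (∀ c ∈ C, c.length = n) ∧
    (∀ y : List (Fin q), y.length = n - R → ∃ c ∈ C, y.Sublist c) ∧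
    C.card = k}

open Finset Filter

namespace DelCov

variable {q : ℕ}

/-- Number of adjacent unequal pairs ("changes"); number of runs minus one. -/
def chg : List (Fin q) → ℕ
  | [] => 0
  | [_] => 0
  | a :: b :: t => (if a = b then 0 else 1) + chg (b :: t)

lemma chg_cons_cons (a b : Fin q) (t) :
    chg (a :: b :: t) = (if a = b then 0 else 1) + chg (b :: t) := rfl

lemma chg_cons_le (a : Fin q) (l) : chg (a :: l) ≤ 1 + chg l := by
  cases l with
  | nil => simp [chg]
  | cons b t => rw [chg_cons_cons]; split <;> omega

lemma chg_le_chg_cons (a : Fin q) (l) : chg l ≤ chg (a :: l) := by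
  cases l with
  | nil => simp [chg]
  | cons b t => rw [chg_cons_cons]; omega

lemma chg_sublist_aux {y c : List (Fin q)} (h : y.Sublist c) :
    (chg c + 2 * y.length ≤ chg y + 2 * c.length) ∧
    ∀ a : Fin q, chg (a :: c) + 2 * y.length ≤ chg (a :: y) + 2 * c.length := by
  induction h with
  | slnil => simp
  | @cons y c b h ih =>
    obtain ⟨h1, h2⟩ := ih
    have hc := chg_cons_le b c
    constructor
    · simp only [List.length_cons]; omega
    · intro a
      have hab : chg (a :: b :: c) ≤ 1 + chg (b :: c) := chg_cons_le a (b :: c)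
      have hay : chg y ≤ chg (a :: y) := chg_le_chg_cons a y
      simp only [List.length_cons]; omega
  | @cons_cons y c b h ih =>
    obtain ⟨h1, h2⟩ := ih
    constructor
    · have := h2 b; simp only [List.length_cons]; omega
    · intro a
      have e1 : chg (a :: b :: c) = (if a = b then 0 else 1) + chg (b :: c) := rfl
      have e2 : chg (a :: b :: y) = (if a = b then 0 else 1) + chg (b :: y) := rfl
      have := h2 b
      simp only [List.length_cons]; omega

lemma chg_le_of_sublist {y c : List (Fin q)} (h : y.Sublist c) :
    chg c ≤ chg y + 2 * (c.length - y.length) := by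
  have := (chg_sublist_aux h).1
  have := h.length_le
  omega


/-- The finset of all words of length `m` over `Fin q`. -/
def words (q m : ℕ) : Finset (List (Fin q)) :=
  (Finset.univ : Finset (Fin m → Fin q)).image List.ofFn

lemma mem_words {m : ℕ} {y : List (Fin q)} : y ∈ words q m ↔ y.length = m := by
  constructor
  · rintro h
    simp only [words, Finset.mem_image] at h
    obtain ⟨f, -, rfl⟩ := h
    simp
  · intro h
    subst h
    simp only [words, Finset.mem_image]
    exact ⟨fun i => y.get (Fin.cast rfl i), Finset.mem_univ _, by simp [List.ofFn_getElem]⟩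

lemma card_words (m : ℕ) : (words q m).card = q ^ m := by
  rw [words, Finset.card_image_of_injective _ List.ofFn_injective]
  simp [Fintype.card_fun]

/-- The set of subsequences of `c` of length `m`. -/
def ball (c : List (Fin q)) (m : ℕ) : Finset (List (Fin q)) :=
  c.sublists.toFinset.filter (fun y => y.length = m)

lemma mem_ball {c : List (Fin q)} {m : ℕ} {y : List (Fin q)} :
    y ∈ ball c m ↔ y.Sublist c ∧ y.length = m := by
  simp [ball, List.mem_sublists]


lemma chg_replicate_append (a b : Fin q) (t : List (Fin q)) (hab : a ≠ b) :
    ∀ k, 1 ≤ k → chg (List.replicate k a ++ b :: t) = 1 + chg (b :: t) := by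
  intro k
  induction k with
  | zero => omega
  | succ k ih =>
    intro _
    cases k with
    | zero => simp [chg_cons_cons, if_neg hab]
    | succ k =>
      have e : List.replicate (k + 2) a ++ b :: t
          = a :: (List.replicate (k + 1) a ++ b :: t) := rfl
      have e2 : List.replicate (k + 1) a ++ b :: t
          = a :: (List.replicate k a ++ b :: t) := rfl
      rw [e, e2, chg_cons_cons, if_pos rfl, ← e2, ih (by omega)]
      omega

lemma hockey (x : ℕ) : ∀ R : ℕ, ∑ d ∈ range (R + 1), (x + d).choose d = (x + R + 1).choose R := by
  intro R
  induction R with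
  | zero => simp
  | succ R ih =>
    rw [Finset.sum_range_succ, ih]
    have e : x + (R + 1) = x + R + 1 := by omega
    rw [e]
    exact (Nat.choose_succ_succ' (x + R + 1) R).symm

lemma choose_mono_d (x : ℕ) {d1 d2 : ℕ} (h : d1 ≤ d2) :
    (x + d1).choose d1 ≤ (x + d2).choose d2 := by
  have e1 : (x + d1).choose d1 = (x + d1).choose x := by
    simpa using Nat.choose_symm (Nat.le_add_right x d1)
  have e2 : (x + d2).choose d2 = (x + d2).choose x := by
    simpa using Nat.choose_symm (Nat.le_add_right x d2)
  rw [e1, e2]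
  exact Nat.choose_le_choose x (by omega)


lemma ball_eq_empty {c : List (Fin q)} {m : ℕ} (h : c.length < m) : ball c m = ∅ := by
  ext y
  simp only [mem_ball, Finset.notMem_empty, iff_false, not_and]
  intro hs hl
  have := hs.length_le
  omega


lemma card_ball_le_aux :
    ∀ (N : ℕ) (c : List (Fin q)), c.length ≤ N → ∀ m : ℕ,
      (ball c m).card ≤ (chg c + (c.length - m)).choose (c.length - m) := by
  intro N
  induction N with
  | zero =>
    intro c hc m
    have hcn : c = [] := List.length_eq_zero_iff.mp (by omega)
    subst hcn
    by_cases hm : 0 < m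
    · rw [ball_eq_empty (by simpa using hm)]; simp
    · have hm0 : m = 0 := by omega
      subst hm0
      have : ball ([] : List (Fin q)) 0 ⊆ {[]} := by
        intro y hy
        rw [mem_ball] at hy
        simp [List.sublist_nil.mp hy.1]
      have h1 : (ball ([] : List (Fin q)) 0).card ≤ 1 := by
        simpa using Finset.card_le_card this
      simpa [chg] using h1
  | succ N ih =>
    intro c hc m
    by_cases hm : c.length < m
    · rw [ball_eq_empty hm]; simp
    push_neg at hm
    cases hcc : c with
    | nil =>
      subst hcc
      simp only [List.length_nil, Nat.le_zero] at hm
      subst hm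
      have : ball ([] : List (Fin q)) 0 ⊆ {[]} := by
        intro y hy
        rw [mem_ball] at hy
        simp [List.sublist_nil.mp hy.1]
      have h1 : (ball ([] : List (Fin q)) 0).card ≤ 1 := by
        simpa using Finset.card_le_card this
      simpa [chg] using h1
    | cons a rest =>
      subst hcc
      set c : List (Fin q) := a :: rest with hcdef
      set p : Fin q → Bool := fun x => decide (x = a) with hp
      set T := c.takeWhile p with hT
      set c' := c.dropWhile p with hc'
      set k := T.length with hk
      have hsplit : T ++ c' = c := by rw [hT, hc', List.takeWhile_append_dropWhile]
      have hTrep : T = List.replicate k a := by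
        rw [List.eq_replicate_iff]
        refine ⟨rfl, fun b hb => ?_⟩
        have := List.mem_takeWhile_imp (hT ▸ hb)
        simpa [hp] using this
      have hk1 : 1 ≤ k := by
        have : T = a :: rest.takeWhile p := by
          rw [hT, hcdef, List.takeWhile_cons_of_pos (by simp [hp])]
        rw [hk, this]
        simp
      have hlen : c.length = k + c'.length := by
        rw [← hsplit, List.length_append]
      have hclen : c'.length ≤ N := by
        have : c.length ≤ N + 1 := hc
        omega
      -- main case split on c'
      cases hc'c : c' with
      | nil =>
        -- c is a constant word
        have hcrep : c = List.replicate k a := by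
          rw [← hsplit, hc'c, List.append_nil, hTrep]
        have hsub : ball c m ⊆ {List.replicate m a} := by
          intro y hy
          rw [mem_ball] at hy
          obtain ⟨hs, hl⟩ := hy
          rw [hcrep, List.sublist_replicate_iff] at hs
          obtain ⟨j, hj, rfl⟩ := hs
          simp only [List.length_replicate] at hl
          subst hl
          simp
        calc (ball c m).card ≤ 1 := by simpa using Finset.card_le_card hsub
          _ ≤ _ := Nat.one_le_iff_ne_zero.mpr (Nat.choose_pos (by omega)).ne'
      | cons b t =>
        have hba : a ≠ b := by
          have h2 := List.head?_dropWhile_not p c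
          rw [show (c.dropWhile p).head? = some b by rw [← hc', hc'c]; rfl] at h2
          have h3 : p b = false := h2
          simp [hp] at h3
          exact fun h => h3 h.symm
        have hchg : chg c = 1 + chg c' := by
          rw [← hsplit, hTrep, hc'c]
          exact chg_replicate_append a b t hba k hk1
        -- the covering family
        have hcov : ball c m ⊆ (range (k + 1)).biUnion
            (fun j => (ball c' (m - j)).image (fun v => List.replicate j a ++ v)) := by
          intro y hy
          rw [mem_ball] at hy
          obtain ⟨hs, hl⟩ := hy
          rw [← hsplit, List.sublist_append_iff] at hs
          obtain ⟨u, v, rfl, hu, hv⟩ := hs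
          rw [hTrep, List.sublist_replicate_iff] at hu
          obtain ⟨j, hj, rfl⟩ := hu
          rw [Finset.mem_biUnion]
          refine ⟨j, Finset.mem_range.mpr (by omega), ?_⟩
          rw [Finset.mem_image]
          refine ⟨v, ?_, rfl⟩
          rw [mem_ball]
          refine ⟨hv, ?_⟩
          rw [List.length_append, List.length_replicate] at hl
          omega
        set R := c.length - m with hR
        set g : ℕ → ℕ := fun d => (chg c' + d).choose d with hg
        calc (ball c m).card
            ≤ ∑ j ∈ range (k + 1), ((ball c' (m - j)).image
                (fun v => List.replicate j a ++ v)).card :=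
              (Finset.card_le_card hcov).trans (Finset.card_biUnion_le)
          _ ≤ ∑ j ∈ range (k + 1), (ball c' (m - j)).card :=
              Finset.sum_le_sum (fun j _ => Finset.card_image_le)
          _ ≤ ∑ j ∈ range (k + 1), (if m ≤ c'.length + j then g (c'.length + j - m) else 0) := by
              refine Finset.sum_le_sum (fun j _ => ?_)
              by_cases hj : m ≤ c'.length + j
              · rw [if_pos hj]
                calc (ball c' (m - j)).card
                    ≤ (chg c' + (c'.length - (m - j))).choose (c'.length - (m - j)) :=
                      ih c' hclen (m - j)
                  _ ≤ g (c'.length + j - m) := choose_mono_d (chg c') (by omega)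
              · rw [if_neg hj, ball_eq_empty (by omega)]
                simp
          _ = ∑ j ∈ (range (k + 1)).filter (fun j => m ≤ c'.length + j),
                g (c'.length + j - m) := (Finset.sum_filter _ _).symm
          _ = ∑ d ∈ ((range (k + 1)).filter (fun j => m ≤ c'.length + j)).image
                (fun j => c'.length + j - m), g d := by
              rw [Finset.sum_image]
              intro x hx y hy hxy
              simp only [Finset.coe_filter, Finset.mem_filter, Finset.mem_range, Set.mem_setOf_eq] at hx hy hxy
              omega
          _ ≤ ∑ d ∈ range (R + 1), g d := by
              refine Finset.sum_le_sum_of_subset ?_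
              intro d hd
              simp only [Finset.mem_image, Finset.mem_filter, Finset.mem_range] at hd
              obtain ⟨j, ⟨hj1, hj2⟩, rfl⟩ := hd
              rw [Finset.mem_range]
              omega
          _ = (chg c' + R + 1).choose R := hockey (chg c') R
          _ = (chg c + R).choose R := by rw [hchg]; ring_nf
  
lemma card_ball_le (c : List (Fin q)) (m : ℕ) :
    (ball c m).card ≤ (chg c + (c.length - m)).choose (c.length - m) :=
  card_ball_le_aux c.length c le_rfl m


lemma words_zero : words q 0 = {[]} := by
  ext y; simp [mem_words, List.length_eq_zero_iff]

lemma sum_words_succ {M : Type} [AddCommMonoid M] (m : ℕ) (F : List (Fin q) → M) :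
    ∑ y ∈ words q (m + 1), F y = ∑ a : Fin q, ∑ t ∈ words q m, F (a :: t) := by
  have himg : words q (m + 1) =
      ((Finset.univ : Finset (Fin q)) ×ˢ words q m).image (fun p => p.1 :: p.2) := by
    ext y
    simp only [mem_words, Finset.mem_image, Finset.mem_product, Finset.mem_univ, true_and,
      Prod.exists]
    constructor
    · intro hl
      cases y with
      | nil => simp at hl
      | cons a t =>
        exact ⟨a, t, by simpa using hl, rfl⟩
    · rintro ⟨a, t, ht, rfl⟩
      simp [ht]
  rw [himg, Finset.sum_image (by rintro ⟨a, t⟩ - ⟨a', t'⟩ - h; simpa using h),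
    Finset.sum_product]

lemma chg_cons_headI [NeZero q] (a : Fin q) (t : List (Fin q)) (ht : t ≠ []) :
    chg (a :: t) = (if a = t.headI then 0 else 1) + chg t := by
  cases t with
  | nil => simp at ht
  | cons b u => rfl

lemma sum_if_eq_head (z : ℝ) (h : Fin q) :
    ∑ a : Fin q, (if a = h then (1 : ℝ) else z) = 1 + ((q : ℝ) - 1) * z := by
  have e : ∀ a : Fin q, (if a = h then (1 : ℝ) else z) = (if a = h then 1 - z else 0) + z := by
    intro a; split <;> ring
  rw [Finset.sum_congr rfl (fun a _ => e a), Finset.sum_add_distrib]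
  rw [Finset.sum_ite_eq' Finset.univ h (fun _ => (1 : ℝ) - z)]
  simp only [Finset.mem_univ, if_pos, Finset.sum_const, Finset.card_univ, Fintype.card_fin,
    nsmul_eq_mul]
  ring

lemma sum_z_pow_chg [NeZero q] (z : ℝ) (m : ℕ) :
    ∑ y ∈ words q (m + 1), z ^ chg y = q * (1 + ((q : ℝ) - 1) * z) ^ m := by
  induction m with
  | zero =>
    rw [sum_words_succ 0 (fun y => z ^ chg y)]
    have : ∀ a : Fin q, ∑ t ∈ words q 0, z ^ chg (a :: t) = 1 := by
      intro a
      rw [words_zero]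
      simp [chg]
    rw [Finset.sum_congr rfl (fun a _ => this a)]
    simp
  | succ m ih =>
    rw [sum_words_succ (m + 1) (fun y => z ^ chg y)]
    have key : ∀ a : Fin q, ∀ t ∈ words q (m + 1),
        z ^ chg (a :: t) = (if a = t.headI then (1 : ℝ) else z) * z ^ chg t := by
      intro a t ht
      have htne : t ≠ [] := by
        intro h
        have := mem_words.mp ht
        rw [h] at this
        simp at this
      rw [chg_cons_headI a t htne, pow_add]
      congr 1
      split <;> simp
    calc ∑ a : Fin q, ∑ t ∈ words q (m + 1), z ^ chg (a :: t)
        = ∑ a : Fin q, ∑ t ∈ words q (m + 1), (if a = t.headI then (1 : ℝ) else z) * z ^ chg t := by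
          refine Finset.sum_congr rfl (fun a _ => Finset.sum_congr rfl (fun t ht => key a t ht))
      _ = ∑ t ∈ words q (m + 1), ∑ a : Fin q, (if a = t.headI then (1 : ℝ) else z) * z ^ chg t :=
          Finset.sum_comm
      _ = ∑ t ∈ words q (m + 1), (1 + ((q : ℝ) - 1) * z) * z ^ chg t := by
          refine Finset.sum_congr rfl (fun t _ => ?_)
          rw [← Finset.sum_mul, sum_if_eq_head z t.headI]
      _ = (1 + ((q : ℝ) - 1) * z) * ∑ t ∈ words q (m + 1), z ^ chg t := by
          rw [Finset.mul_sum]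
      _ = q * (1 + ((q : ℝ) - 1) * z) ^ (m + 1) := by rw [ih]; ring

lemma card_bad_le [NeZero q] (z : ℝ) (hz : 1 ≤ z) (m k : ℕ) (hm : 1 ≤ m) :
    (((words q m).filter (fun y => k + 1 ≤ chg y)).card : ℝ) * z ^ (k + 1) ≤
      q * (1 + ((q : ℝ) - 1) * z) ^ (m - 1) := by
  obtain ⟨m', rfl⟩ : ∃ m', m = m' + 1 := ⟨m - 1, by omega⟩
  have hz0 : (0 : ℝ) ≤ z := by linarith
  calc (((words q (m' + 1)).filter (fun y => k + 1 ≤ chg y)).card : ℝ) * z ^ (k + 1)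
      = ∑ _y ∈ (words q (m' + 1)).filter (fun y => k + 1 ≤ chg y), z ^ (k + 1) := by
        rw [Finset.sum_const, nsmul_eq_mul]
    _ ≤ ∑ y ∈ (words q (m' + 1)).filter (fun y => k + 1 ≤ chg y), z ^ chg y := by
        refine Finset.sum_le_sum (fun y hy => ?_)
        have := (Finset.mem_filter.mp hy).2
        exact pow_le_pow_right₀ hz this
    _ ≤ ∑ y ∈ words q (m' + 1), z ^ chg y := by
        refine Finset.sum_le_sum_of_subset_of_nonneg (Finset.filter_subset _ _) ?_
        intro y _ _
        positivity
    _ = q * (1 + ((q : ℝ) - 1) * z) ^ (m' + 1 - 1) := by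
        rw [sum_z_pow_chg z m']
        norm_num


lemma valid_nonempty [NeZero q] (n R : ℕ) :
    ((words q n : Finset (List (Fin q)))) ∈ {C : Finset (List (Fin q)) |
      (∀ c ∈ C, c.length = n) ∧
      (∀ y : List (Fin q), y.length = n - R → ∃ c ∈ C, y.Sublist c)} := by
  constructor
  · intro c hc; exact mem_words.mp hc
  · intro y hy
    refine ⟨y ++ List.replicate (n - (n - R)) (default : Fin q), ?_, List.sublist_append_left _ _⟩
    rw [mem_words]
    rw [List.length_append, List.length_replicate, hy]
    omega

lemma KD_exists [NeZero q] (n R : ℕ) :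
    ∃ C : Finset (List (Fin q)), (∀ c ∈ C, c.length = n) ∧
      (∀ y : List (Fin q), y.length = n - R → ∃ c ∈ C, y.Sublist c) ∧ C.card = KD q n R := by
  have hne : {k : ℕ | ∃ C : Finset (List (Fin q)),
      (∀ c ∈ C, c.length = n) ∧
      (∀ y : List (Fin q), y.length = n - R → ∃ c ∈ C, y.Sublist c) ∧
      C.card = k}.Nonempty := by
    obtain ⟨h1, h2⟩ := valid_nonempty (q := q) n R
    exact ⟨(words q n).card, words q n, h1, h2, rfl⟩
  have := Nat.sInf_mem hne
  obtain ⟨C, h1, h2, h3⟩ := this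
  exact ⟨C, h1, h2, h3⟩

lemma KD_le (n R : ℕ) (C : Finset (List (Fin q)))
    (h1 : ∀ c ∈ C, c.length = n)
    (h2 : ∀ y : List (Fin q), y.length = n - R → ∃ c ∈ C, y.Sublist c) :
    KD q n R ≤ C.card :=
  Nat.sInf_le ⟨C, h1, h2, rfl⟩

lemma master [NeZero q] (n R k : ℕ) (hRn : R ≤ n) :
    q ^ (n - R) ≤ KD q n R * (k + 3 * R).choose R +
      ((words q (n - R)).filter (fun y => k + 1 ≤ chg y)).card := by
  obtain ⟨C, hlen, hcov, hcard⟩ := KD_exists (q := q) n R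
  set m := n - R with hm
  set good := (words q m).filter (fun y => chg y ≤ k) with hgood
  set bad := (words q m).filter (fun y => k + 1 ≤ chg y) with hbad
  have hsplitcard : good.card + bad.card = q ^ m := by
    classical
    rw [← card_words (q := q) m]
    have h2 : bad = (words q m).filter (fun y => ¬ chg y ≤ k) := by
      refine Finset.filter_congr (fun y _ => ?_)
      simp only [not_le]
      omega
    rw [hgood, h2]
    exact Finset.card_filter_add_card_filter_not (fun y => chg y ≤ k)
  have hsub : good ⊆ (C.filter (fun c => chg c ≤ k + 2 * R)).biUnion (fun c => ball c m) := by
    intro y hy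
    obtain ⟨hyw, hychg⟩ := Finset.mem_filter.mp hy
    have hylen : y.length = m := mem_words.mp hyw
    obtain ⟨c, hcC, hsubl⟩ := hcov y (by rw [hylen])
    have hclen : c.length = n := hlen c hcC
    have hchg : chg c ≤ k + 2 * R := by
      have := chg_le_of_sublist hsubl
      rw [hclen, hylen] at this
      omega
    rw [Finset.mem_biUnion]
    exact ⟨c, Finset.mem_filter.mpr ⟨hcC, hchg⟩, mem_ball.mpr ⟨hsubl, hylen⟩⟩
  have hgoodcard : good.card ≤ KD q n R * (k + 3 * R).choose R := by
    calc good.card ≤ ∑ c ∈ C.filter (fun c => chg c ≤ k + 2 * R), (ball c m).card :=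
          (Finset.card_le_card hsub).trans Finset.card_biUnion_le
      _ ≤ ∑ c ∈ C.filter (fun c => chg c ≤ k + 2 * R), (k + 3 * R).choose R := by
          refine Finset.sum_le_sum (fun c hc => ?_)
          obtain ⟨hcC, hchg⟩ := Finset.mem_filter.mp hc
          have hclen : c.length = n := hlen c hcC
          calc (ball c m).card ≤ (chg c + (c.length - m)).choose (c.length - m) :=
                card_ball_le c m
            _ = (chg c + R).choose R := by rw [hclen]; congr 1 <;> omega
            _ ≤ (k + 3 * R).choose R := Nat.choose_le_choose R (by omega)
      _ = (C.filter (fun c => chg c ≤ k + 2 * R)).card * (k + 3 * R).choose R := by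
          rw [Finset.sum_const, smul_eq_mul]
      _ ≤ KD q n R * (k + 3 * R).choose R := by
          have : (C.filter (fun c => chg c ≤ k + 2 * R)).card ≤ C.card :=
            Finset.card_filter_le _ _
          exact Nat.mul_le_mul_right _ (by omega)
  omega


/-- A VT-style syndrome. -/
def vt [NeZero q] : List (Fin q) → ℕ
  | [] => 0
  | a :: t => (if a = 0 then 0 else t.length + 1) + vt t

lemma vt_insert [NeZero q] (hq : 2 ≤ q) :
    ∀ (y : List (Fin q)) (k : ℕ), k ≤ y.length + 1 →
      ∃ c : List (Fin q), y.Sublist c ∧ c.length = y.length + 1 ∧ vt c = vt y + k := by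
  have hone : ((⟨1, by omega⟩ : Fin q)) ≠ 0 := by
    intro h
    have := congrArg Fin.val h
    simpa using this
  intro y
  induction y with
  | nil =>
    intro k hk
    have hk01 : k = 0 ∨ k = 1 := by
      simp only [List.length_nil] at hk
      omega
    rcases hk01 with rfl | rfl
    · exact ⟨[0], List.nil_sublist _, rfl, by simp [vt]⟩
    · exact ⟨[⟨1, by omega⟩], List.nil_sublist _, rfl, by simp [vt, hone]⟩
  | cons a t ih =>
    intro k hk
    by_cases ha : a = 0
    · by_cases hk2 : k ≤ t.length + 1
      · obtain ⟨c', hs, hl, hv⟩ := ih k hk2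
        refine ⟨a :: c', hs.cons₂ a, by simp [hl], ?_⟩
        have e1 : vt (a :: c') = vt c' := by simp [vt, ha]
        have e2 : vt (a :: t) = vt t := by simp [vt, ha]
        rw [e1, e2, hv]
      · have hk3 : k = t.length + 2 := by
          simp only [List.length_cons] at hk
          omega
        refine ⟨(⟨1, by omega⟩ : Fin q) :: a :: t, List.sublist_cons_self _ _, by simp, ?_⟩
        have e1 : vt ((⟨1, by omega⟩ : Fin q) :: a :: t) = ((a :: t).length + 1) + vt (a :: t) := by
          simp [vt, hone]
        rw [e1]
        simp only [List.length_cons]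
        omega
    · by_cases hk0 : k = 0
      · subst hk0
        refine ⟨0 :: a :: t, List.sublist_cons_self _ _, by simp, ?_⟩
        simp [vt]
      · simp only [List.length_cons] at hk
        obtain ⟨c', hs, hl, hv⟩ := ih (k - 1) (by omega)
        refine ⟨a :: c', hs.cons₂ a, by simp [hl], ?_⟩
        have e1 : vt (a :: c') = (c'.length + 1) + vt c' := by simp [vt, ha]
        have e2 : vt (a :: t) = (t.length + 1) + vt t := by simp [vt, ha]
        rw [e1, e2, hv, hl]
        omega

lemma KD_one_le [NeZero q] (hq : 2 ≤ q) (n : ℕ) (hn : 1 ≤ n) :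
    KD q n 1 * (n + 1) ≤ q ^ n := by
  classical
  set f : List (Fin q) → ℕ := fun c => vt c % (n + 1) with hf
  have hmaps : ∀ c ∈ words q n, f c ∈ range (n + 1) := by
    intro c _
    rw [Finset.mem_range]
    exact Nat.mod_lt _ (by omega)
  have hsum : (words q n).card = ∑ a ∈ range (n + 1), ((words q n).filter (fun c => f c = a)).card :=
    Finset.card_eq_sum_card_fiberwise hmaps
  obtain ⟨a0, ha0, hmin⟩ := Finset.exists_min_image (range (n + 1))
    (fun a => ((words q n).filter (fun c => f c = a)).card) ⟨0, by simp⟩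
  have ha0n : a0 < n + 1 := Finset.mem_range.mp ha0
  set C := (words q n).filter (fun c => f c = a0) with hC
  have hcardC : C.card * (n + 1) ≤ q ^ n := by
    have : C.card * (n + 1) = ∑ _a ∈ range (n + 1), C.card := by
      rw [Finset.sum_const, Finset.card_range, smul_eq_mul]; ring
    rw [this]
    rw [← card_words (q := q) n, hsum]
    exact Finset.sum_le_sum (fun a ha => hmin a ha)
  refine le_trans (Nat.mul_le_mul_right (n + 1) (KD_le n 1 C ?_ ?_)) hcardC
  · intro c hc
    exact mem_words.mp (Finset.mem_filter.mp hc).1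
  · intro y hy
    set r := vt y % (n + 1) with hr
    have hrn : r < n + 1 := Nat.mod_lt _ (by omega)
    set k := (a0 + (n + 1) - r) % (n + 1) with hk
    have hkn : k < n + 1 := Nat.mod_lt _ (by omega)
    have hylen : y.length + 1 = n := by omega
    obtain ⟨c, hs, hl, hv⟩ := vt_insert hq y k (by omega)
    refine ⟨c, Finset.mem_filter.mpr ⟨mem_words.mpr (by omega), ?_⟩, hs⟩
    -- f c = a0
    have hrle : r ≤ vt y := Nat.mod_le _ _
    have hmod : vt y + k ≡ a0 [MOD (n + 1)] := by
      have hk' : k ≡ a0 + (n + 1) - r [MOD (n + 1)] := Nat.mod_modEq _ _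
      have hy2 : vt y ≡ r [MOD (n + 1)] := (Nat.mod_modEq _ _).symm
      calc vt y + k ≡ r + (a0 + (n + 1) - r) [MOD (n + 1)] := Nat.ModEq.add hy2 hk'
        _ = a0 + (n + 1) := by omega
        _ ≡ a0 + 0 [MOD (n + 1)] :=
            Nat.ModEq.add_left a0 ((Nat.modEq_zero_iff_dvd).mpr dvd_rfl)
        _ = a0 := by omega
    show vt c % (n + 1) = a0
    rw [hv]
    calc (vt y + k) % (n + 1) = a0 % (n + 1) := hmod
      _ = a0 := Nat.mod_eq_of_lt ha0n

lemma KD_zero_le [NeZero q] (n : ℕ) : KD q n 0 ≤ q ^ n := by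
  rw [← card_words (q := q) n]
  refine KD_le n 0 (words q n) (fun c hc => mem_words.mp hc) (fun y hy => ?_)
  exact ⟨y, mem_words.mpr (by omega), List.Sublist.refl y⟩

lemma KD_concat [NeZero q] (n1 R1 n2 R2 : ℕ) (h1 : R1 ≤ n1) (h2 : R2 ≤ n2) :
    KD q (n1 + n2) (R1 + R2) ≤ KD q n1 R1 * KD q n2 R2 := by
  obtain ⟨C1, hlen1, hcov1, hcard1⟩ := KD_exists (q := q) n1 R1
  obtain ⟨C2, hlen2, hcov2, hcard2⟩ := KD_exists (q := q) n2 R2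
  have step : KD q (n1 + n2) (R1 + R2) ≤ ((C1 ×ˢ C2).image (fun p => p.1 ++ p.2)).card := by
    refine KD_le _ _ _ ?_ ?_
    · intro c hc
      rw [Finset.mem_image] at hc
      obtain ⟨⟨c1, c2⟩, hm, rfl⟩ := hc
      rw [Finset.mem_product] at hm
      simp only [List.length_append]
      rw [hlen1 _ hm.1, hlen2 _ hm.2]
    · intro y hy
      have hu : (y.take (n1 - R1)).length = n1 - R1 := by
        rw [List.length_take]
        omega
      have hw : (y.drop (n1 - R1)).length = n2 - R2 := by
        rw [List.length_drop]
        omega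
      obtain ⟨c1, hc1, hs1⟩ := hcov1 _ hu
      obtain ⟨c2, hc2, hs2⟩ := hcov2 _ hw
      refine ⟨c1 ++ c2, Finset.mem_image.mpr ⟨(c1, c2), Finset.mem_product.mpr ⟨hc1, hc2⟩, rfl⟩, ?_⟩
      have := hs1.append hs2
      rwa [List.take_append_drop] at this
  calc KD q (n1 + n2) (R1 + R2) ≤ ((C1 ×ˢ C2).image (fun p => p.1 ++ p.2)).card := step
    _ ≤ (C1 ×ˢ C2).card := Finset.card_image_le
    _ = KD q n1 R1 * KD q n2 R2 := by rw [Finset.card_product, hcard1, hcard2]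

lemma KD_blocks [NeZero q] (s r : ℕ) (hs : 1 ≤ s) :
    ∀ j : ℕ, KD q (j * s + r) j ≤ KD q s 1 ^ j * q ^ r := by
  intro j
  induction j with
  | zero => simpa using KD_zero_le (q := q) r
  | succ j ih =>
    have hjs : j ≤ j * s := by
      calc j = j * 1 := by ring
        _ ≤ j * s := Nat.mul_le_mul_left j hs
    have e : (j + 1) * s + r = s + (j * s + r) := by ring
    have e2 : (1 : ℕ) + j = j + 1 := by ring
    calc KD q ((j + 1) * s + r) (j + 1)
        = KD q (s + (j * s + r)) (1 + j) := by rw [e, e2]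
      _ ≤ KD q s 1 * KD q (j * s + r) j := KD_concat s 1 (j * s + r) j hs (by omega)
      _ ≤ KD q s 1 * (KD q s 1 ^ j * q ^ r) := Nat.mul_le_mul_left _ ih
      _ = KD q s 1 ^ (j + 1) * q ^ r := by ring

lemma KD_upper_nat [NeZero q] (hq : 2 ≤ q) (R n : ℕ) (hR : 1 ≤ R) (hn : R ≤ n) :
    KD q n R * (n / R + 1) ^ R ≤ q ^ n := by
  set s := n / R with hs
  set r := n % R with hr
  have hs1 : 1 ≤ s := Nat.one_le_div_iff (by omega) |>.mpr hn
  have hdm : R * s + r = n := Nat.div_add_mod n R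
  have h1 : KD q n R ≤ KD q s 1 ^ R * q ^ r := by
    have := KD_blocks (q := q) s r hs1 R
    rwa [show R * s + r = n from hdm] at this
  calc KD q n R * (s + 1) ^ R ≤ (KD q s 1 ^ R * q ^ r) * (s + 1) ^ R :=
        Nat.mul_le_mul_right _ h1
    _ = (KD q s 1 * (s + 1)) ^ R * q ^ r := by rw [mul_pow]; ring
    _ ≤ (q ^ s) ^ R * q ^ r := by
        have := KD_one_le (q := q) hq s hs1
        exact Nat.mul_le_mul_right _ (Nat.pow_le_pow_left this R)
    _ = q ^ (s * R + r) := by rw [← pow_mul, ← pow_add]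
    _ = q ^ n := by
        rw [show s * R + r = n by rw [Nat.mul_comm]; exact hdm]

end DelCov

open DelCov

noncomputable def fseq (q R : ℕ) (n : ℕ) : ℝ :=
  (KD q n R : ℝ) * (n : ℝ) ^ R * ((q : ℝ) - 1) ^ R /
    ((R.factorial : ℝ) * (q : ℝ) ^ n)

section
variable {q R : ℕ} [NeZero q]

set_option maxHeartbeats 2000000 in
lemma eventually_le_fseq (hq : 2 ≤ q) (hR : 1 ≤ R) {ε : ℝ} (hε : 0 < ε) (hε1 : ε ≤ 1) :
    ∀ᶠ n : ℕ in atTop, ((1 + ε) ^ (2 * R + 1))⁻¹ ≤ fseq q R n := by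
  have hq2 : (2 : ℝ) ≤ q := by exact_mod_cast hq
  have hq0 : (0 : ℝ) < q := by linarith
  set p : ℝ := ((q : ℝ) - 1) / q with hp
  have hp0 : 0 < p := div_pos (by linarith) hq0
  have hpq : (q : ℝ) * p = (q : ℝ) - 1 := by rw [hp]; field_simp
  set t : ℝ := ε / 2 with ht
  have ht0 : 0 < t := by positivity
  set z : ℝ := 1 + t with hz
  have hz1 : 1 ≤ z := by rw [hz]; linarith
  have hz0 : 0 < z := by linarith
  set c : ℝ := p * t * (ε - t) / (1 + t) with hc
  have hc0 : 0 < c := by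
    have het : ε - t = ε / 2 := by rw [ht]; ring
    rw [hc, het, ht]
    positivity
  set η : ℝ := ε / (1 + ε) with hη
  have hη0 : 0 < η := by positivity
  -- eventual facts
  have hev1 : ∀ᶠ n : ℕ in atTop, R + 1 ≤ n := Filter.eventually_ge_atTop (R + 1)
  have htend : Tendsto (fun n : ℕ => Real.exp (-(c * ((n - R : ℕ) : ℝ)))) atTop (nhds 0) := by
    apply Real.tendsto_exp_atBot.comp
    have h1 : Tendsto (fun n : ℕ => ((n - R : ℕ) : ℝ)) atTop atTop :=
      tendsto_natCast_atTop_atTop.comp (tendsto_sub_atTop_nat R)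
    have h3 : Tendsto (fun x : ℝ => c * x) atTop atTop :=
      Tendsto.const_mul_atTop hc0 tendsto_id
    have h2 : Tendsto (fun x : ℝ => -(c * x)) atTop atBot :=
      tendsto_neg_atTop_atBot.comp h3
    exact h2.comp h1
  have hev2 : ∀ᶠ n : ℕ in atTop, Real.exp (-(c * ((n - R : ℕ) : ℝ))) ≤ η :=
    htend.eventually_le_const hη0
  have htend3 : Tendsto (fun n : ℕ => ε * ((q : ℝ) - 1) * (n : ℝ)) atTop atTop := by
    apply Tendsto.const_mul_atTop (by nlinarith : (0 : ℝ) < ε * ((q : ℝ) - 1))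
    exact tendsto_natCast_atTop_atTop
  have hev3 : ∀ᶠ n : ℕ in atTop, (q : ℝ) * (3 * R + 1) ≤ ε * ((q : ℝ) - 1) * n :=
    htend3.eventually_ge_atTop _
  filter_upwards [hev1, hev2, hev3] with n hn1 hn2 hn3
  -- fixed n
  set m : ℕ := n - R with hm
  have hm1 : 1 ≤ m := by omega
  have hmn : m + R = n := by omega
  set k : ℕ := ⌈(1 + ε) * p * (m : ℝ)⌉₊ with hk
  set Bad : ℕ := ((words q m).filter (fun y => k + 1 ≤ chg y)).card with hBad
  have hbad1 : (Bad : ℝ) * z ^ (k + 1) ≤ q * (1 + ((q : ℝ) - 1) * z) ^ (m - 1) :=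
    card_bad_le z hz1 m k hm1
  have hA : 1 + ((q : ℝ) - 1) * z = q * (1 + p * t) := by
    rw [hz, hp]; field_simp; ring
  have hpt0 : (0 : ℝ) < 1 + p * t := by positivity
  have hqm : (q : ℝ) ^ m = (q : ℝ) ^ (m - 1) * q := by
    rw [← pow_succ]
    congr 1
    omega
  have hstep1 : (Bad : ℝ) * z ^ (k + 1) ≤ (q : ℝ) ^ m * Real.exp (p * t * m) := by
    calc (Bad : ℝ) * z ^ (k + 1) ≤ q * (1 + ((q : ℝ) - 1) * z) ^ (m - 1) := hbad1
      _ = (q : ℝ) ^ m * (1 + p * t) ^ (m - 1) := by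
          rw [hA, mul_pow, hqm]; ring
      _ ≤ (q : ℝ) ^ m * Real.exp (p * t * m) := by
          have e1 : (1 + p * t) ≤ Real.exp (p * t) := by
            have := Real.add_one_le_exp (p * t); linarith
          have e2 : (1 + p * t) ^ (m - 1) ≤ (Real.exp (p * t)) ^ (m - 1) :=
            pow_le_pow_left₀ hpt0.le e1 _
          have e3 : (Real.exp (p * t)) ^ (m - 1) = Real.exp (((m - 1 : ℕ) : ℝ) * (p * t)) :=
            (Real.exp_nat_mul _ _).symm
          have e4 : ((m - 1 : ℕ) : ℝ) * (p * t) ≤ p * t * m := by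
            have h5 : ((m - 1 : ℕ) : ℝ) ≤ (m : ℝ) := by
              exact_mod_cast Nat.sub_le m 1
            have h6 := mul_le_mul_of_nonneg_right h5 (mul_nonneg hp0.le ht0.le)
            nlinarith [h6]
          have e5 : Real.exp (((m - 1 : ℕ) : ℝ) * (p * t)) ≤ Real.exp (p * t * m) :=
            Real.exp_le_exp.mpr e4
          have := e2.trans (e3 ▸ e5)
          have hqm0 : (0 : ℝ) ≤ (q : ℝ) ^ m := by positivity
          exact mul_le_mul_of_nonneg_left this hqm0
  have hzeq : z ^ (k + 1) = Real.exp (((k : ℝ) + 1) * Real.log z) := by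
    conv_lhs => rw [← Real.exp_log hz0]
    rw [← Real.exp_nat_mul]
    push_cast
    ring_nf
  have hlogz : t / (1 + t) ≤ Real.log z := by
    have h1 := Real.one_sub_inv_le_log_of_pos hz0
    have h2 : 1 - z⁻¹ = t / (1 + t) := by
      rw [hz]
      field_simp
      ring
    linarith
  have hstep2 : Real.exp ((1 + ε) * p * (m : ℝ) * (t / (1 + t))) ≤ z ^ (k + 1) := by
    rw [hzeq]
    apply Real.exp_le_exp.mpr
    have hk1 : (1 + ε) * p * (m : ℝ) ≤ (k : ℝ) := Nat.le_ceil _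
    have hk2 : (1 + ε) * p * (m : ℝ) ≤ (k : ℝ) + 1 := by linarith
    have htd0 : 0 ≤ t / (1 + t) := by positivity
    have hml0 : (0 : ℝ) ≤ (1 + ε) * p * (m : ℝ) := by positivity
    calc (1 + ε) * p * (m : ℝ) * (t / (1 + t)) ≤ ((k : ℝ) + 1) * (t / (1 + t)) :=
          mul_le_mul_of_nonneg_right hk2 htd0
      _ ≤ ((k : ℝ) + 1) * Real.log z :=
          mul_le_mul_of_nonneg_left hlogz (by positivity)
  have hbadQ : (Bad : ℝ) ≤ η * (q : ℝ) ^ m := by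
    have hbad2 : (Bad : ℝ) * Real.exp ((1 + ε) * p * (m : ℝ) * (t / (1 + t))) ≤
        (q : ℝ) ^ m * Real.exp (p * t * m) :=
      le_trans (mul_le_mul_of_nonneg_left hstep2 (Nat.cast_nonneg Bad)) hstep1
    have hbad3 : (Bad : ℝ) ≤ (q : ℝ) ^ m *
        Real.exp (p * t * m - (1 + ε) * p * (m : ℝ) * (t / (1 + t))) := by
      rw [Real.exp_sub, ← mul_div_assoc, le_div_iff₀ (Real.exp_pos _)]
      exact hbad2
    have hexpeq : p * t * (m : ℝ) - (1 + ε) * p * (m : ℝ) * (t / (1 + t)) = -(c * (m : ℝ)) := by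
      rw [hc]
      field_simp
      ring
    rw [hexpeq] at hbad3
    calc (Bad : ℝ) ≤ (q : ℝ) ^ m * Real.exp (-(c * (m : ℝ))) := hbad3
      _ ≤ (q : ℝ) ^ m * η := by
          apply mul_le_mul_of_nonneg_left _ (by positivity)
          exact_mod_cast hn2
      _ = η * (q : ℝ) ^ m := mul_comm _ _
  -- master bound
  have hMn : q ^ m ≤ KD q n R * (k + 3 * R).choose R + Bad := master n R k (by omega)
  set Ch : ℝ := ((k + 3 * R).choose R : ℝ) with hCh
  have hM : (q : ℝ) ^ m ≤ (KD q n R : ℝ) * Ch + (Bad : ℝ) := by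
    rw [hCh]
    exact_mod_cast hMn
  have h1 : (q : ℝ) ^ m ≤ (1 + ε) * ((KD q n R : ℝ) * Ch) := by
    have hKC : (1 - η) * (q : ℝ) ^ m ≤ (KD q n R : ℝ) * Ch := by
      have he : (1 - η) * (q : ℝ) ^ m = (q : ℝ) ^ m - η * (q : ℝ) ^ m := by ring
      rw [he]
      linarith [hM, hbadQ]
    have hcompl : (1 + ε) * (1 - η) = 1 := by
      rw [hη]
      field_simp
      ring
    calc (q : ℝ) ^ m = (1 + ε) * ((1 - η) * (q : ℝ) ^ m) := by
          rw [← mul_assoc, hcompl, one_mul]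
      _ ≤ (1 + ε) * ((KD q n R : ℝ) * Ch) :=
          mul_le_mul_of_nonneg_left hKC (by linarith)
  have h2 : (R.factorial : ℝ) * Ch ≤ ((k : ℝ) + 3 * R) ^ R := by
    have hnat : R.factorial * (k + 3 * R).choose R ≤ (k + 3 * R) ^ R := by
      rw [← Nat.descFactorial_eq_factorial_mul_choose]
      exact Nat.descFactorial_le_pow _ _
    rw [hCh]
    exact_mod_cast hnat
  have hratio : (q : ℝ) * ((k : ℝ) + 3 * R) ≤ ((q : ℝ) - 1) * n * (1 + ε) ^ 2 := by
    have hkle : (k : ℝ) ≤ (1 + ε) * p * m + 1 :=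
      le_of_lt (Nat.ceil_lt_add_one (by positivity))
    have hmlen : (m : ℝ) ≤ n := by exact_mod_cast (by omega : m ≤ n)
    have hqk : (q : ℝ) * (k : ℝ) ≤ (1 + ε) * ((q : ℝ) - 1) * m + q := by
      calc (q : ℝ) * (k : ℝ) ≤ q * ((1 + ε) * p * m + 1) :=
            mul_le_mul_of_nonneg_left hkle hq0.le
        _ = (1 + ε) * ((q : ℝ) * p) * m + q := by ring
        _ = (1 + ε) * ((q : ℝ) - 1) * m + q := by rw [hpq]
    have h0 : (0 : ℝ) ≤ (1 + ε) * ((q : ℝ) - 1) :=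
      mul_nonneg (by linarith) (by linarith)
    have hmono : (1 + ε) * ((q : ℝ) - 1) * m ≤ (1 + ε) * ((q : ℝ) - 1) * n :=
      mul_le_mul_of_nonneg_left hmlen h0
    have hn0 : (0 : ℝ) ≤ (n : ℝ) := Nat.cast_nonneg n
    have hfin : (0 : ℝ) ≤ ((q : ℝ) - 1) * n * ε ^ 2 :=
      mul_nonneg (mul_nonneg (by linarith) hn0) (sq_nonneg ε)
    calc (q : ℝ) * ((k : ℝ) + 3 * R) = (q : ℝ) * k + (q : ℝ) * (3 * R) := by ring
      _ ≤ ((1 + ε) * ((q : ℝ) - 1) * m + q) + (q : ℝ) * (3 * R) := by linarith [hqk]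
      _ ≤ ((1 + ε) * ((q : ℝ) - 1) * n + q) + (q : ℝ) * (3 * R) := by linarith [hmono]
      _ = (1 + ε) * ((q : ℝ) - 1) * n + (q : ℝ) * (3 * R + 1) := by ring
      _ ≤ (1 + ε) * ((q : ℝ) - 1) * n + ε * ((q : ℝ) - 1) * n := by linarith [hn3]
      _ ≤ ((q : ℝ) - 1) * n * (1 + ε) ^ 2 := by nlinarith [hfin]
  -- final computation
  have hqn : (q : ℝ) ^ n = (q : ℝ) ^ m * (q : ℝ) ^ R := by
    rw [← pow_add, hmn]
  have hfact0 : (0 : ℝ) < (R.factorial : ℝ) := by exact_mod_cast R.factorial_pos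
  have hgoal : ((1 + ε) ^ (2 * R + 1))⁻¹ * ((R.factorial : ℝ) * (q : ℝ) ^ n) ≤
      (KD q n R : ℝ) * (n : ℝ) ^ R * ((q : ℝ) - 1) ^ R := by
    have hCh0 : (0 : ℝ) ≤ Ch := by rw [hCh]; positivity
    have hKD0 : (0 : ℝ) ≤ (KD q n R : ℝ) := Nat.cast_nonneg _
    calc ((1 + ε) ^ (2 * R + 1))⁻¹ * ((R.factorial : ℝ) * (q : ℝ) ^ n)
        = (q : ℝ) ^ m * ((R.factorial : ℝ) * (q : ℝ) ^ R) / (1 + ε) ^ (2 * R + 1) := by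
          rw [hqn]; ring
      _ ≤ ((1 + ε) * ((KD q n R : ℝ) * Ch)) * ((R.factorial : ℝ) * (q : ℝ) ^ R) /
            (1 + ε) ^ (2 * R + 1) := by gcongr
      _ = (KD q n R : ℝ) * (((R.factorial : ℝ) * Ch) * (q : ℝ) ^ R) / (1 + ε) ^ (2 * R) := by
          rw [pow_succ]
          have hε0' : (1 + ε) ≠ 0 := by positivity
          field_simp
      _ ≤ (KD q n R : ℝ) * ((((k : ℝ) + 3 * R) ^ R) * (q : ℝ) ^ R) / (1 + ε) ^ (2 * R) := by
          gcongr
      _ = (KD q n R : ℝ) * ((q : ℝ) * ((k : ℝ) + 3 * R)) ^ R / ((1 + ε) ^ 2) ^ R := by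
          rw [mul_pow, ← pow_mul]
          ring_nf
      _ ≤ (KD q n R : ℝ) * (((q : ℝ) - 1) * n * (1 + ε) ^ 2) ^ R / ((1 + ε) ^ 2) ^ R := by
          gcongr
      _ = (KD q n R : ℝ) * (n : ℝ) ^ R * ((q : ℝ) - 1) ^ R := by
          rw [mul_pow, mul_pow]
          have : ((1 + ε) ^ 2) ^ R ≠ 0 := by positivity
          field_simp
  show ((1 + ε) ^ (2 * R + 1))⁻¹ ≤
    (KD q n R : ℝ) * (n : ℝ) ^ R * ((q : ℝ) - 1) ^ R /
      ((R.factorial : ℝ) * (q : ℝ) ^ n)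
  rw [le_div_iff₀ (by positivity)]
  exact hgoal

end

section
variable {q R : ℕ} [NeZero q]

lemma eventually_fseq_le (hq : 2 ≤ q) (hR : 1 ≤ R) :
    ∀ᶠ n : ℕ in atTop, fseq q R n ≤ ((R : ℝ) * ((q : ℝ) - 1)) ^ R / (R.factorial : ℝ) := by
  have hq2 : (2 : ℝ) ≤ q := by exact_mod_cast hq
  filter_upwards [Filter.eventually_ge_atTop R] with n hn
  have hKD := KD_upper_nat (q := q) hq R n hR hn
  set s : ℕ := n / R with hs
  have hns : (n : ℝ) ≤ (R : ℝ) * ((s : ℝ) + 1) := by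
    have hdm : R * s + n % R = n := Nat.div_add_mod n R
    have hmod : n % R < R := Nat.mod_lt _ (by omega)
    have : n ≤ R * (s + 1) := by
      rw [Nat.mul_succ]
      omega
    calc (n : ℝ) ≤ ((R * (s + 1) : ℕ) : ℝ) := by exact_mod_cast this
      _ = (R : ℝ) * ((s : ℝ) + 1) := by push_cast; ring
  have h1 : (KD q n R : ℝ) * ((s : ℝ) + 1) ^ R ≤ (q : ℝ) ^ n := by
    have := hKD
    calc (KD q n R : ℝ) * ((s : ℝ) + 1) ^ R = ((KD q n R * (s + 1) ^ R : ℕ) : ℝ) := by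
          push_cast; ring
      _ ≤ ((q ^ n : ℕ) : ℝ) := by exact_mod_cast hKD
      _ = (q : ℝ) ^ n := by push_cast; ring
  have h2 : (n : ℝ) ^ R ≤ (R : ℝ) ^ R * ((s : ℝ) + 1) ^ R := by
    rw [← mul_pow]
    exact pow_le_pow_left₀ (Nat.cast_nonneg n) hns R
  have hKD0 : (0 : ℝ) ≤ (KD q n R : ℝ) := Nat.cast_nonneg _
  have hq10 : (0 : ℝ) ≤ (q : ℝ) - 1 := by linarith
  show (KD q n R : ℝ) * (n : ℝ) ^ R * ((q : ℝ) - 1) ^ R /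
      ((R.factorial : ℝ) * (q : ℝ) ^ n) ≤ ((R : ℝ) * ((q : ℝ) - 1)) ^ R / (R.factorial : ℝ)
  rw [div_le_div_iff₀ (by positivity) (by positivity)]
  calc (KD q n R : ℝ) * (n : ℝ) ^ R * ((q : ℝ) - 1) ^ R * (R.factorial : ℝ)
      ≤ (KD q n R : ℝ) * ((R : ℝ) ^ R * ((s : ℝ) + 1) ^ R) * ((q : ℝ) - 1) ^ R *
        (R.factorial : ℝ) := by gcongr
    _ = ((R : ℝ) ^ R * ((q : ℝ) - 1) ^ R * (R.factorial : ℝ)) *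
        ((KD q n R : ℝ) * ((s : ℝ) + 1) ^ R) := by ring
    _ ≤ ((R : ℝ) ^ R * ((q : ℝ) - 1) ^ R * (R.factorial : ℝ)) * (q : ℝ) ^ n := by
        have hnn : (0 : ℝ) ≤ (R : ℝ) ^ R * ((q : ℝ) - 1) ^ R * (R.factorial : ℝ) := by
          positivity
        exact mul_le_mul_of_nonneg_left h1 hnn
    _ = ((R : ℝ) * ((q : ℝ) - 1)) ^ R * ((R.factorial : ℝ) * (q : ℝ) ^ n) := by
        rw [mul_pow]; ring

end

/-- Asymptotic sphere-covering lower bound for `R`-deletion-covering codes: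
`liminf_{n→∞} K_D^q(n,R) · n^R (q-1)^R / (R! q^n) ≥ 1`. -/
theorem deletion_covering_lower_bound_asymptotic (q R : ℕ) (hq : 2 ≤ q) (hR : 1 ≤ R) :
    1 ≤ Filter.liminf (fun n : ℕ =>
      (KD q n R : ℝ) * (n : ℝ) ^ R * ((q : ℝ) - 1) ^ R /
        ((R.factorial : ℝ) * (q : ℝ) ^ n)) Filter.atTop := by
  haveI : NeZero q := ⟨by omega⟩
  have hfun : (fun n : ℕ =>
      (KD q n R : ℝ) * (n : ℝ) ^ R * ((q : ℝ) - 1) ^ R /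
        ((R.factorial : ℝ) * (q : ℝ) ^ n)) = fseq q R := rfl
  rw [hfun]
  -- coboundedness
  have hbdd : IsBoundedUnder (· ≤ ·) atTop (fseq q R) := by
    refine ⟨((R : ℝ) * ((q : ℝ) - 1)) ^ R / (R.factorial : ℝ), ?_⟩
    rw [Filter.eventually_map]
    exact eventually_fseq_le hq hR
  have hcob : IsCoboundedUnder (· ≥ ·) atTop (fseq q R) :=
    hbdd.isCoboundedUnder_ge
  -- nonnegativity
  have hq2 : (2 : ℝ) ≤ q := by exact_mod_cast hq
  have hnonneg : ∀ n : ℕ, 0 ≤ fseq q R n := by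
    intro n
    apply div_nonneg
    · apply mul_nonneg
      · apply mul_nonneg (Nat.cast_nonneg _) (by positivity)
      · exact pow_nonneg (by linarith) R
    · positivity
  by_contra hlt
  push_neg at hlt
  obtain ⟨x, hx1, hx2⟩ := exists_between hlt
  by_cases hx0 : x ≤ 0
  · have h0 : (0 : ℝ) ≤ liminf (fseq q R) atTop :=
      Filter.le_liminf_of_le hcob (Filter.Eventually.of_forall hnonneg)
    linarith
  · push_neg at hx0
    set L : ℝ := Real.log x⁻¹ with hL
    have hxinv1 : 1 < x⁻¹ := (one_lt_inv₀ hx0).mpr hx2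
    have hL0 : 0 < L := Real.log_pos hxinv1
    set ε : ℝ := min 1 (L / (2 * (2 * R + 1))) with hε
    have hε0 : 0 < ε := by
      apply lt_min one_pos
      positivity
    have hε1 : ε ≤ 1 := min_le_left _ _
    have hpow : (1 + ε) ^ (2 * R + 1) ≤ x⁻¹ := by
      have h1 : (1 + ε) ^ (2 * R + 1) ≤ Real.exp (ε * (2 * R + 1)) := by
        have h2 : 1 + ε ≤ Real.exp ε := by
          have := Real.add_one_le_exp ε; linarith
        calc (1 + ε) ^ (2 * R + 1) ≤ (Real.exp ε) ^ (2 * R + 1) :=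
              pow_le_pow_left₀ (by linarith) h2 _
          _ = Real.exp (((2 * R + 1 : ℕ) : ℝ) * ε) := (Real.exp_nat_mul _ _).symm
          _ = Real.exp (ε * (2 * R + 1)) := by push_cast; ring_nf
      have h3 : ε * (2 * R + 1) ≤ L := by
        have h4 : ε ≤ L / (2 * (2 * R + 1)) := min_le_right _ _
        have h5 : (0 : ℝ) < 2 * (2 * R + 1) := by positivity
        have h6 := mul_le_mul_of_nonneg_right h4 (by positivity : (0:ℝ) ≤ ((2 * R : ℝ) + 1))
        calc ε * (2 * R + 1) ≤ L / (2 * (2 * R + 1)) * (2 * R + 1) := h6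
          _ ≤ L := by
            rw [div_mul_eq_mul_div, div_le_iff₀ h5]
            nlinarith [hL0.le]
      calc (1 + ε) ^ (2 * R + 1) ≤ Real.exp (ε * (2 * R + 1)) := h1
        _ ≤ Real.exp L := Real.exp_le_exp.mpr h3
        _ = x⁻¹ := by rw [hL, Real.exp_log (by positivity)]
    have hxle : x ≤ ((1 + ε) ^ (2 * R + 1))⁻¹ := by
      have h7 := inv_anti₀ (by positivity : (0:ℝ) < (1 + ε) ^ (2 * R + 1)) hpow
      rwa [inv_inv] at h7
    have hxlim : x ≤ liminf (fseq q R) atTop :=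
      Filter.le_liminf_of_le hcob
        ((eventually_le_fseq hq hR hε0 hε1).mono (fun n h => le_trans hxle h))
    linarith
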